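/- Let (V,c,p) be an instance of Asymmetric A Priori TSP with p(V) := Σ_{v∈V} p(v) > 0. Then there exists a vertex d ∈ V such that, defining p' : V → [0,1] by p'(d) = 1 and p'(v) = p(v) for v ≠ d, the following two inequalities hold: (i) E_{A∼p}[c(T[A])] ≤ E_{A∼p'}[c(T[A])] for every tour T on V, and (ii) E_{A∼p'}[TSP(A,c)] ≤ 2·(1 + 1/p(V)) · E_{A∼p}[TSP(A,c)]. -/

import Mathlib

noncomputable section

/-- The cost of a tour given as a cyclic list: the sum of `c` over consecutive pairs
(cyclically). -/
def cycCost {V : Type*} (c : V → V → ℝ) (l : List V) : ℝ :=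
  (List.zipWith c l (l.rotate 1)).sum

/-- `l` is a tour on the finite set `A`: a cyclic ordering of `A`, visiting each element
exactly once. -/
def IsTour {V : Type*} [DecidableEq V] (A : Finset V) (l : List V) : Prop :=
  l.Nodup ∧ l.toFinset = A

/-- Short-cutting a tour to the set `A` of active vertices. -/
def shortcut {V : Type*} [DecidableEq V] (l : List V) (A : Finset V) : List V :=
  l.filter (fun v => v ∈ A)

/-- The expectation of `f` over the random set of active vertices, where each vertex `v`
is active independently with probability `p v`. -/
def apExpect {V : Type*} [Fintype V] [DecidableEq V] (p : V → ℝ) (f : Finset V → ℝ) : ℝ :=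
  ∑ A : Finset V, (∏ v ∈ A, p v) * (∏ v ∈ Aᶜ, (1 - p v)) * f A

/-- The minimum cost of a tour on `A` with respect to `c`. -/
def TSP {V : Type*} [DecidableEq V] (c : V → V → ℝ) (A : Finset V) : ℝ :=
  sInf {x : ℝ | ∃ l : List V, IsTour A l ∧ x = cycCost c l}

namespace Work

variable {V : Type*} (c : V → V → ℝ)

/-- path cost from `x` through `l` ending with edge into `y` -/
def sCost (x : V) (l : List V) (y : V) : ℝ :=
  (List.zipWith c (x :: l) (l ++ [y])).sum

lemma sCost_nil (x y : V) : sCost c x [] y = c x y := by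
  simp [sCost]

lemma sCost_cons (x b : V) (t : List V) (y : V) :
    sCost c x (b :: t) y = c x b + sCost c b t y := by
  simp [sCost]

lemma cycCost_cons (x : V) (l : List V) : cycCost c (x :: l) = sCost c x l x := by
  have h : (x :: l).rotate 1 = l ++ [x] := by
    simpa using List.rotate_cons_succ l x 0
  simp [cycCost, sCost, h]

lemma sCost_append_cons (x y z : V) (u t : List V) :
    sCost c x (u ++ y :: t) z = sCost c x u y + sCost c y t z := by
  induction u generalizing x with
  | nil => simp [sCost_cons, sCost_nil]
  | cons b tb ih => simp [sCost_cons, ih]; ring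

lemma sCost_triangle (htri : ∀ x y z, c x z ≤ c x y + c y z)
    (x y z : V) (l : List V) : sCost c x l z ≤ sCost c x l y + c y z := by
  induction l generalizing x with
  | nil => simpa [sCost_nil] using htri x y z
  | cons b t ih => simp only [sCost_cons]; have := ih b; linarith

end Work

namespace Work2
open Work
variable {V : Type*} (c : V → V → ℝ)

lemma cycCost_nil : cycCost c [] = 0 := by simp [cycCost]

lemma cycCost_rotate_one (l : List V) : cycCost c (l.rotate 1) = cycCost c l := by
  match l with
  | [] => simp
  | [a] => simp [cycCost]
  | a :: b :: t =>
    have h : (a :: b :: t).rotate 1 = b :: (t ++ [a]) := by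
      simpa using List.rotate_cons_succ (b :: t) a 0
    rw [h, cycCost_cons, cycCost_cons]
    have h1 : sCost c b (t ++ [a]) b = sCost c b t a + sCost c a [] b := by
      simpa using sCost_append_cons c b a b t []
    have h2 : sCost c a (b :: t) a = sCost c a [] b + sCost c b t a := by
      simpa using sCost_append_cons c a b a [] t
    rw [h1, h2]; ring

lemma cycCost_rotate (l : List V) (n : ℕ) : cycCost c (l.rotate n) = cycCost c l := by
  induction n with
  | zero => simp
  | succ k ih =>
    have : l.rotate (k + 1) = (l.rotate k).rotate 1 := by
      rw [List.rotate_rotate]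
    rw [this, cycCost_rotate_one, ih]

lemma cycCost_cons_le (hc0 : ∀ x y, 0 ≤ c x y) (hcrefl : ∀ v, c v v = 0)
    (htri : ∀ x y z, c x z ≤ c x y + c y z) (v : V) (l : List V) :
    cycCost c l ≤ cycCost c (v :: l) := by
  match l with
  | [] => simp [cycCost, hcrefl]
  | [a] =>
    have : cycCost c [a] = 0 := by simp [cycCost, hcrefl]
    rw [this, cycCost_cons]
    have : sCost c v [a] v = c v a + c a v := by simp [sCost]
    rw [this]; have := hc0 v a; have := hc0 a v; linarith
  | a :: b :: t =>
    rw [cycCost_cons, cycCost_cons]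
    have h1 : sCost c v (a :: b :: t) v = c v a + sCost c a (b :: t) v := by
      simpa [sCost_nil] using sCost_append_cons c v a v [] (b :: t)
    rw [h1]
    have h2 := sCost_triangle c htri a v a (b :: t)
    linarith

end Work2

namespace Work3
open Work Work2 List
variable {V : Type*} (c : V → V → ℝ)

lemma cycCost_eq_append_comm (xs ys : List V) :
    cycCost c (xs ++ ys) = cycCost c (ys ++ xs) := by
  have h : (ys ++ xs).rotate ys.length = xs ++ ys := by
    rw [List.rotate_eq_drop_append_take (by simp)]
    simp
  rw [← h, cycCost_rotate]

lemma cycCost_middle_le (hc0 : ∀ x y, 0 ≤ c x y) (hcrefl : ∀ v, c v v = 0)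
    (htri : ∀ x y z, c x z ≤ c x y + c y z) (xs ys : List V) (v : V) :
    cycCost c (xs ++ ys) ≤ cycCost c (xs ++ v :: ys) := by
  have h1 : cycCost c (xs ++ ys) = cycCost c (ys ++ xs) := cycCost_eq_append_comm c xs ys
  have h2 : cycCost c (xs ++ v :: ys) = cycCost c ((v :: ys) ++ xs) :=
    cycCost_eq_append_comm c xs (v :: ys)
  rw [h1, h2]
  simpa using cycCost_cons_le c hc0 hcrefl htri v (ys ++ xs)

lemma sublist_intermediate {l₁ l₂ : List V} (h : l₁ <+ l₂) :
    l₁ = l₂ ∨ ∃ xs v ys, l₂ = xs ++ v :: ys ∧ l₁ <+ xs ++ ys := by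
  induction h with
  | slnil => exact Or.inl rfl
  | cons a h ih =>
    right
    exact ⟨[], a, _, rfl, h⟩
  | cons_cons a h ih =>
    rcases ih with rfl | ⟨xs, v, ys, rfl, hsub⟩
    · exact Or.inl rfl
    · right
      exact ⟨a :: xs, v, ys, rfl, by simpa using hsub.cons₂ a⟩

lemma cycCost_sublist_le (hc0 : ∀ x y, 0 ≤ c x y) (hcrefl : ∀ v, c v v = 0)
    (htri : ∀ x y z, c x z ≤ c x y + c y z) :
    ∀ (n : ℕ) (l₂ l₁ : List V), l₂.length ≤ n → l₁ <+ l₂ → cycCost c l₁ ≤ cycCost c l₂ := by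
  intro n
  induction n with
  | zero =>
    intro l₂ l₁ hlen hsub
    have : l₂ = [] := List.length_eq_zero_iff.mp (Nat.le_zero.mp hlen)
    subst this
    have : l₁ = [] := List.sublist_nil.mp hsub
    simp [this]
  | succ k ih =>
    intro l₂ l₁ hlen hsub
    rcases sublist_intermediate hsub with rfl | ⟨xs, v, ys, rfl, hsub'⟩
    · exact le_refl _
    · have hlen' : (xs ++ ys).length ≤ k := by
        have := hlen; simp at this ⊢; omega
      calc cycCost c l₁ ≤ cycCost c (xs ++ ys) := ih _ _ hlen' hsub'
        _ ≤ cycCost c (xs ++ v :: ys) := cycCost_middle_le c hc0 hcrefl htri xs ys v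

lemma cycCost_mono_sublist (hc0 : ∀ x y, 0 ≤ c x y) (hcrefl : ∀ v, c v v = 0)
    (htri : ∀ x y z, c x z ≤ c x y + c y z) {l₁ l₂ : List V} (h : l₁ <+ l₂) :
    cycCost c l₁ ≤ cycCost c l₂ :=
  cycCost_sublist_le c hc0 hcrefl htri l₂.length l₂ l₁ le_rfl h

lemma cycCost_nonneg (hc0 : ∀ x y, 0 ≤ c x y) (l : List V) : 0 ≤ cycCost c l := by
  have : ∀ (l l' : List V), 0 ≤ (List.zipWith c l l').sum := by
    intro l
    induction l with
    | nil => intro l'; simp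
    | cons a t ih =>
      intro l'
      cases l' with
      | nil => simp
      | cons b t' => simp only [List.zipWith_cons_cons, List.sum_cons]
                     have := ih t'; have := hc0 a b; linarith
  exact this l (l.rotate 1)

lemma cycCost_append_head (x : V) (u u' : List V) :
    cycCost c ((x :: u) ++ (x :: u')) = cycCost c (x :: u) + cycCost c (x :: u') := by
  have h : (x :: u) ++ (x :: u') = x :: (u ++ x :: u') := by simp
  rw [h, cycCost_cons, cycCost_cons, cycCost_cons, sCost_append_cons]

end Work3

namespace Work4
open Work Work2 Work3 List

variable {V : Type*} [DecidableEq V] (c : V → V → ℝ)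
variable (hc0 : ∀ x y, 0 ≤ c x y) (hcrefl : ∀ v, c v v = 0)
  (htri : ∀ x y z, c x z ≤ c x y + c y z)

def tourSet (A : Finset V) : Set ℝ := {x : ℝ | ∃ l : List V, IsTour A l ∧ x = cycCost c l}

lemma tourSet_nonempty (A : Finset V) : (tourSet c A).Nonempty :=
  ⟨cycCost c A.toList, A.toList, ⟨A.nodup_toList, A.toList_toFinset⟩, rfl⟩

include hc0 in
lemma tourSet_bddBelow (A : Finset V) : BddBelow (tourSet c A) := by
  refine ⟨0, fun x hx => ?_⟩
  obtain ⟨l, _, rfl⟩ := hx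
  exact cycCost_nonneg c hc0 l

include hc0 in
lemma TSP_nonneg (A : Finset V) : 0 ≤ TSP c A := by
  apply le_csInf (tourSet_nonempty c A)
  rintro x ⟨l, _, rfl⟩
  exact cycCost_nonneg c hc0 l

include hc0 in
lemma TSP_le_cycCost {A : Finset V} {l : List V} (h : IsTour A l) :
    TSP c A ≤ cycCost c l :=
  csInf_le (tourSet_bddBelow c hc0 A) ⟨l, h, rfl⟩

include hc0 hcrefl htri in
lemma TSP_le_of_walk {A : Finset V} {l : List V} (h : l.toFinset = A) :
    TSP c A ≤ cycCost c l := by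
  have hd : l.dedup.toFinset = A := by
    rw [← h]; ext x; simp
  calc TSP c A ≤ cycCost c l.dedup :=
        TSP_le_cycCost c hc0 ⟨l.nodup_dedup, hd⟩
    _ ≤ cycCost c l := cycCost_mono_sublist c hc0 hcrefl htri l.dedup_sublist

include hc0 hcrefl htri in
lemma TSP_erase_le (A : Finset V) (d : V) : TSP c (A.erase d) ≤ TSP c A := by
  apply le_csInf (tourSet_nonempty c A)
  rintro x ⟨l, ⟨hnd, hfin⟩, rfl⟩
  have hsub : l.filter (fun v => v ∈ A.erase d) <+ l := List.filter_sublist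
  refine le_trans (TSP_le_cycCost c hc0 ⟨hsub.nodup hnd, ?_⟩)
    (cycCost_mono_sublist c hc0 hcrefl htri hsub)
  ext x
  simp only [List.mem_toFinset, List.mem_filter, decide_eq_true_eq]
  constructor
  · rintro ⟨_, h2⟩; exact h2
  · intro hx
    exact ⟨by rw [← hfin] at *; simp_all [Finset.mem_erase], hx⟩

end Work4

namespace Work5
open Work Work2 Work3 Work4 List

variable {V : Type*} [DecidableEq V] (c : V → V → ℝ)
variable (hc0 : ∀ x y, 0 ≤ c x y) (hcrefl : ∀ v, c v v = 0)
  (htri : ∀ x y z, c x z ≤ c x y + c y z)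

lemma TSP_eq (A : Finset V) : TSP c A = sInf (tourSet c A) := rfl

include hc0 hcrefl htri in
lemma TSP_merge_inner {B : Finset V} {d d' x : V} (hx : x ∈ B) (hxd : x ≠ d) (hxd' : x ≠ d')
    (hd : d ∈ B) (hd' : d' ∈ B) (hne : d ≠ d')
    {l₁ l₂ : List V} (h₁ : IsTour (B.erase d) l₁) (h₂ : IsTour (B.erase d') l₂) :
    TSP c B ≤ cycCost c l₁ + cycCost c l₂ := by
  obtain ⟨hn₁, hf₁⟩ := h₁
  obtain ⟨hn₂, hf₂⟩ := h₂
  have hx₁ : x ∈ l₁ := by rw [← List.mem_toFinset, hf₁]; exact Finset.mem_erase.mpr ⟨hxd, hx⟩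
  have hx₂ : x ∈ l₂ := by rw [← List.mem_toFinset, hf₂]; exact Finset.mem_erase.mpr ⟨hxd', hx⟩
  obtain ⟨s, t, rfl⟩ := List.append_of_mem hx₁
  obtain ⟨s', t', rfl⟩ := List.append_of_mem hx₂
  have hr₁ : (s ++ x :: t).rotate s.length = x :: (t ++ s) := by
    rw [List.rotate_eq_drop_append_take (by simp)]
    simp
  have hr₂ : (s' ++ x :: t').rotate s'.length = x :: (t' ++ s') := by
    rw [List.rotate_eq_drop_append_take (by simp)]
    simp
  have hc₁ : cycCost c (x :: (t ++ s)) = cycCost c (s ++ x :: t) := by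
    rw [← hr₁, cycCost_rotate]
  have hc₂ : cycCost c (x :: (t' ++ s')) = cycCost c (s' ++ x :: t') := by
    rw [← hr₂, cycCost_rotate]
  set M := (x :: (t ++ s)) ++ (x :: (t' ++ s')) with hM
  have hMfin : M.toFinset = B := by
    have hp₁ : (x :: (t ++ s)) ~ (s ++ x :: t) := by
      rw [← hr₁]; exact List.rotate_perm _ _
    have hp₂ : (x :: (t' ++ s')) ~ (s' ++ x :: t') := by
      rw [← hr₂]; exact List.rotate_perm _ _
    have e₁ : (x :: (t ++ s)).toFinset = B.erase d := by
      rw [← hf₁]; ext y; simp only [List.mem_toFinset]; exact hp₁.mem_iff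
    have e₂ : (x :: (t' ++ s')).toFinset = B.erase d' := by
      rw [← hf₂]; ext y; simp only [List.mem_toFinset]; exact hp₂.mem_iff
    rw [hM, List.toFinset_append, e₁, e₂]
    ext y
    simp only [Finset.mem_union, Finset.mem_erase]
    constructor
    · rintro (⟨_, h⟩ | ⟨_, h⟩) <;> exact h
    · intro hy
      rcases eq_or_ne y d with rfl | hyd
      · exact Or.inr ⟨hne, hy⟩
      · exact Or.inl ⟨hyd, hy⟩
  calc TSP c B ≤ cycCost c M := TSP_le_of_walk c hc0 hcrefl htri hMfin
    _ = cycCost c (x :: (t ++ s)) + cycCost c (x :: (t' ++ s')) := cycCost_append_head c _ _ _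
    _ = cycCost c (s ++ x :: t) + cycCost c (s' ++ x :: t') := by rw [hc₁, hc₂]

include hc0 hcrefl htri in
lemma TSP_merge {B : Finset V} {d d' : V} (hd : d ∈ B) (hd' : d' ∈ B) (hne : d ≠ d')
    (hcard : 3 ≤ B.card) :
    TSP c B ≤ TSP c (B.erase d) + TSP c (B.erase d') := by
  have hxe : ((B.erase d).erase d').Nonempty := by
    rw [← Finset.card_pos, Finset.card_erase_of_mem (Finset.mem_erase.mpr ⟨hne.symm, hd'⟩),
      Finset.card_erase_of_mem hd]
    omega
  obtain ⟨x, hx⟩ := hxe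
  simp only [Finset.mem_erase] at hx
  obtain ⟨hxd', hxd, hxB⟩ := hx
  have key : ∀ y ∈ tourSet c (B.erase d), ∀ z ∈ tourSet c (B.erase d'),
      TSP c B ≤ y + z := by
    rintro y ⟨l₁, h₁, rfl⟩ z ⟨l₂, h₂, rfl⟩
    exact TSP_merge_inner c hc0 hcrefl htri hxB hxd hxd' hd hd' hne h₁ h₂
  have h2 : TSP c B - TSP c (B.erase d) ≤ TSP c (B.erase d') := by
    rw [TSP_eq c (B.erase d')]
    apply le_csInf (tourSet_nonempty c _)
    intro z hz
    rw [sub_le_iff_le_add, add_comm, ← sub_le_iff_le_add]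
    rw [TSP_eq c (B.erase d)]
    apply le_csInf (tourSet_nonempty c _)
    intro y hy
    have := key y hy z hz
    linarith
  linarith

end Work5

namespace Work6
open Work Work2 Work3 Work4 Work5 List

variable {V : Type*} [DecidableEq V] (c : V → V → ℝ)
variable (hc0 : ∀ x y, 0 ≤ c x y) (hcrefl : ∀ v, c v v = 0)
  (htri : ∀ x y z, c x z ≤ c x y + c y z)

include hc0 hcrefl htri in
lemma comb (B : Finset V) :
    ((B.card : ℝ) - 2) * TSP c B ≤ 2 * ∑ d ∈ B, TSP c (B.erase d) := by
  have hT := TSP_nonneg c hc0 B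
  have hS : 0 ≤ ∑ d ∈ B, TSP c (B.erase d) :=
    Finset.sum_nonneg fun d _ => TSP_nonneg c hc0 _
  rcases le_or_gt B.card 2 with hle | hgt
  · have h2 : ((B.card : ℝ) - 2) ≤ 0 := by
      have : (B.card : ℝ) ≤ 2 := by exact_mod_cast hle
      linarith
    nlinarith
  · have hcard : 3 ≤ B.card := hgt
    have key : ∀ d ∈ B, ∀ d' ∈ B.erase d,
        TSP c B ≤ TSP c (B.erase d) + TSP c (B.erase d') := by
      intro d hd d' hd'
      rw [Finset.mem_erase] at hd'
      exact TSP_merge c hc0 hcrefl htri hd hd'.2 (hd'.1).symm hcard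
    have hsum : ∑ d ∈ B, ∑ _d' ∈ B.erase d, TSP c B ≤
        ∑ d ∈ B, ∑ d' ∈ B.erase d, (TSP c (B.erase d) + TSP c (B.erase d')) :=
      Finset.sum_le_sum fun d hd => Finset.sum_le_sum fun d' hd' => key d hd d' hd'
    set S := ∑ d ∈ B, TSP c (B.erase d) with hSdef
    have hn1 : (1 : ℕ) ≤ B.card := by omega
    have hL : ∑ d ∈ B, ∑ _d' ∈ B.erase d, TSP c B
        = (B.card : ℝ) * ((B.card : ℝ) - 1) * TSP c B := by
      rw [Finset.sum_congr rfl (fun d hd => by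
        rw [Finset.sum_const, Finset.card_erase_of_mem hd, nsmul_eq_mul])]
      rw [Finset.sum_const, nsmul_eq_mul]
      push_cast [Nat.cast_sub hn1]
      ring
    have hR : ∑ d ∈ B, ∑ d' ∈ B.erase d, (TSP c (B.erase d) + TSP c (B.erase d'))
        = 2 * ((B.card : ℝ) - 1) * S := by
      have e1 : ∀ d ∈ B, ∑ d' ∈ B.erase d, (TSP c (B.erase d) + TSP c (B.erase d'))
          = ((B.card : ℝ) - 1) * TSP c (B.erase d) + (S - TSP c (B.erase d)) := by
        intro d hd
        rw [Finset.sum_add_distrib, Finset.sum_const, Finset.card_erase_of_mem hd,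
          nsmul_eq_mul, Finset.sum_erase_eq_sub hd]
        push_cast [Nat.cast_sub hn1]
        ring
      rw [Finset.sum_congr rfl e1, Finset.sum_add_distrib, ← Finset.mul_sum,
        Finset.sum_sub_distrib, Finset.sum_const, nsmul_eq_mul, ← hSdef]
      ring
    rw [hL, hR] at hsum
    have hn3 : (3 : ℝ) ≤ (B.card : ℝ) := by exact_mod_cast hcard
    nlinarith

end Work6

namespace Work7
open Finset

variable {V : Type*} [Fintype V] [DecidableEq V] (p : V → ℝ) (d : V)

def w (p : V → ℝ) (A : Finset V) : ℝ := (∏ v ∈ A, p v) * (∏ v ∈ Aᶜ, (1 - p v))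

lemma apExpect_eq (f : Finset V → ℝ) : apExpect p f = ∑ A : Finset V, w p A * f A := rfl

lemma w_nonneg (hp0 : ∀ v, 0 ≤ p v) (hp1 : ∀ v, p v ≤ 1) (A : Finset V) : 0 ≤ w p A :=
  mul_nonneg (Finset.prod_nonneg fun v _ => hp0 v)
    (Finset.prod_nonneg fun v _ => by have := hp1 v; linarith)

lemma apExpect_mono (hp0 : ∀ v, 0 ≤ p v) (hp1 : ∀ v, p v ≤ 1) {f g : Finset V → ℝ}
    (h : ∀ A, f A ≤ g A) : apExpect p f ≤ apExpect p g := by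
  rw [apExpect_eq, apExpect_eq]
  exact Finset.sum_le_sum fun A _ =>
    mul_le_mul_of_nonneg_left (h A) (w_nonneg p hp0 hp1 A)

def R (p : V → ℝ) (d : V) (T : Finset V) : ℝ :=
  (∏ v ∈ T.erase d, p v) * (∏ v ∈ Tᶜ, (1 - p v))

lemma w_eq_of_mem {T : Finset V} (hd : d ∈ T) : w p T = p d * R p d T := by
  rw [w, R, ← Finset.mul_prod_erase T p hd]; ring

lemma w_erase_eq_of_mem {T : Finset V} (hd : d ∈ T) :
    w p (T.erase d) = (1 - p d) * R p d T := by
  rw [w, R, Finset.compl_erase, Finset.prod_insert (by simpa using hd)]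
  ring

lemma w_update_of_mem {T : Finset V} (hd : d ∈ T) :
    w (Function.update p d 1) T = R p d T := by
  rw [w, R]
  congr 1
  · rw [← Finset.mul_prod_erase T _ hd, Function.update_self, one_mul]
    exact Finset.prod_congr rfl fun v hv =>
      Function.update_of_ne (Finset.ne_of_mem_erase hv) _ _
  · exact Finset.prod_congr rfl fun v hv =>
      by rw [Function.update_of_ne (by rintro rfl; simp_all) _ _]

lemma w_update_of_not_mem {T : Finset V} (hd : d ∉ T) :
    w (Function.update p d 1) T = 0 := by
  rw [w]
  have : ∏ v ∈ Tᶜ, (1 - Function.update p d 1 v) = 0 :=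
    Finset.prod_eq_zero (Finset.mem_compl.mpr hd) (by simp)
  rw [this, mul_zero]

lemma sum_insert_split (h : Finset V → ℝ) :
    ∑ A : Finset V, w p A * h (insert d A) =
      ∑ T ∈ Finset.univ.filter (fun T : Finset V => d ∈ T),
        (w p T + w p (T.erase d)) * h T := by
  rw [← Finset.sum_filter_add_sum_filter_not Finset.univ (fun A : Finset V => d ∈ A)]
  have h1 : ∑ A ∈ Finset.univ.filter (fun A : Finset V => d ∈ A), w p A * h (insert d A)
      = ∑ T ∈ Finset.univ.filter (fun T : Finset V => d ∈ T), w p T * h T := by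
    apply Finset.sum_congr rfl
    intro A hA
    rw [Finset.mem_filter] at hA
    rw [Finset.insert_eq_self.mpr hA.2]
  have h2 : ∑ A ∈ Finset.univ.filter (fun A : Finset V => d ∉ A), w p A * h (insert d A)
      = ∑ T ∈ Finset.univ.filter (fun T : Finset V => d ∈ T), w p (T.erase d) * h T := by
    apply Finset.sum_nbij' (fun A => insert d A) (fun T => T.erase d)
    · intro A hA
      rw [Finset.mem_filter] at hA ⊢
      exact ⟨Finset.mem_univ _, Finset.mem_insert_self d A⟩
    · intro T hT
      rw [Finset.mem_filter] at hT ⊢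
      exact ⟨Finset.mem_univ _, Finset.notMem_erase d T⟩
    · intro A hA
      rw [Finset.mem_filter] at hA
      rw [Finset.erase_insert hA.2]
    · intro T hT
      rw [Finset.mem_filter] at hT
      rw [Finset.insert_erase hT.2]
    · intro A hA
      rw [Finset.mem_filter] at hA
      rw [Finset.erase_insert hA.2]
  rw [h1, h2, ← Finset.sum_add_distrib]
  apply Finset.sum_congr rfl
  intro T _
  ring

lemma L1 (f : Finset V → ℝ) :
    apExpect (Function.update p d 1) f = ∑ A : Finset V, w p A * f (insert d A) := by
  rw [sum_insert_split, apExpect_eq]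
  rw [← Finset.sum_filter_add_sum_filter_not Finset.univ (fun A : Finset V => d ∈ A)]
  have h0 : ∑ A ∈ Finset.univ.filter (fun A : Finset V => d ∉ A),
      w (Function.update p d 1) A * f A = 0 := by
    apply Finset.sum_eq_zero
    intro A hA
    rw [Finset.mem_filter] at hA
    rw [w_update_of_not_mem p d hA.2, zero_mul]
  rw [h0, add_zero]
  apply Finset.sum_congr rfl
  intro T hT
  rw [Finset.mem_filter] at hT
  rw [w_update_of_mem p d hT.2, w_eq_of_mem p d hT.2, w_erase_eq_of_mem p d hT.2]
  ring

lemma W1 (g : Finset V → ℝ) :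
    ∑ A : Finset V, w p A * (if d ∈ A then g A else 0) =
      p d * ∑ A : Finset V, w p A * g (insert d A) := by
  rw [sum_insert_split, Finset.mul_sum]
  rw [← Finset.sum_filter_add_sum_filter_not Finset.univ (fun A : Finset V => d ∈ A)]
  have h0 : ∑ A ∈ Finset.univ.filter (fun A : Finset V => d ∉ A),
      w p A * (if d ∈ A then g A else 0) = 0 := by
    apply Finset.sum_eq_zero
    intro A hA
    rw [Finset.mem_filter] at hA
    simp [hA.2]
  rw [h0, add_zero]
  apply Finset.sum_congr rfl
  intro T hT
  rw [Finset.mem_filter] at hT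
  rw [if_pos hT.2, w_eq_of_mem p d hT.2, w_erase_eq_of_mem p d hT.2]
  ring

end Work7

/-- there is a vertex `d` such that raising its activation probability to `1`
(i) never decreases the expected short-cut cost of any tour, and (ii) increases the expected
cost of an optimal a posteriori tour by a factor of at most `2·(1 + 1/p(V))`. -/
theorem statement8 {V : Type*} [Fintype V] [DecidableEq V]
    (c : V → V → ℝ) (p : V → ℝ)
    (hc0 : ∀ x y, 0 ≤ c x y)
    (hcrefl : ∀ v, c v v = 0)
    (htri : ∀ x y z, c x z ≤ c x y + c y z)
    (hp0 : ∀ v, 0 ≤ p v) (hp1 : ∀ v, p v ≤ 1)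
    (hpV : 0 < ∑ v, p v) :
    ∃ d : V,
      (∀ T : List V, IsTour Finset.univ T →
        apExpect p (fun A => cycCost c (shortcut T A)) ≤
          apExpect (Function.update p d 1) (fun A => cycCost c (shortcut T A))) ∧
      apExpect (Function.update p d 1) (fun A => TSP c A) ≤
        2 * (1 + 1 / (∑ v, p v)) * apExpect p (fun A => TSP c A) := by
  classical
  set q : ℝ := ∑ v, p v with hq
  set E : ℝ := apExpect p (fun A => TSP c A) with hE
  have hqne : q ≠ 0 := ne_of_gt hpV
  -- Part (i) holds for every vertex d.
  have part1 : ∀ d : V, ∀ T : List V, IsTour Finset.univ T →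
      apExpect p (fun A => cycCost c (shortcut T A)) ≤
        apExpect (Function.update p d 1) (fun A => cycCost c (shortcut T A)) := by
    intro d T _
    rw [Work7.L1, ← Work7.apExpect_eq]
    apply Work7.apExpect_mono p hp0 hp1
    intro A
    apply Work3.cycCost_mono_sublist c hc0 hcrefl htri
    apply List.monotone_filter_right
    intro v hv
    simp only [decide_eq_true_eq] at hv ⊢
    exact Finset.mem_insert_of_mem hv
  -- notation
  set G : V → ℝ := fun d => apExpect (Function.update p d 1) (fun A => TSP c A) with hG
  have hGd : ∀ d : V, p d * G d =
      ∑ A : Finset V, Work7.w p A * (if d ∈ A then TSP c A else 0) := by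
    intro d
    rw [hG]
    simp only
    rw [Work7.L1 p d (fun A => TSP c A), Work7.W1 p d (fun A => TSP c A)]
  have sum1 : ∑ d : V, p d * G d =
      ∑ A : Finset V, Work7.w p A * ((A.card : ℝ) * TSP c A) := by
    rw [Finset.sum_congr rfl (fun d _ => hGd d), Finset.sum_comm]
    apply Finset.sum_congr rfl
    intro A _
    rw [← Finset.mul_sum]
    congr 1
    rw [Finset.sum_ite_mem, Finset.univ_inter, Finset.sum_const, nsmul_eq_mul]
  have step2 : ∑ A : Finset V, Work7.w p A * ((A.card : ℝ) * TSP c A) =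
      2 * E + ∑ A : Finset V, Work7.w p A * (((A.card : ℝ) - 2) * TSP c A) := by
    rw [hE, Work7.apExpect_eq, Finset.mul_sum, ← Finset.sum_add_distrib]
    apply Finset.sum_congr rfl
    intro A _
    ring
  have step3 : ∑ A : Finset V, Work7.w p A * (((A.card : ℝ) - 2) * TSP c A) ≤
      ∑ A : Finset V, Work7.w p A * (2 * ∑ d ∈ A, TSP c (A.erase d)) := by
    apply Finset.sum_le_sum
    intro A _
    exact mul_le_mul_of_nonneg_left (Work6.comb c hc0 hcrefl htri A)
      (Work7.w_nonneg p hp0 hp1 A)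
  have step4 : ∑ A : Finset V, Work7.w p A * (2 * ∑ d ∈ A, TSP c (A.erase d)) =
      2 * ∑ d : V, ∑ A : Finset V, Work7.w p A * (if d ∈ A then TSP c (A.erase d) else 0) := by
    have e : ∀ A : Finset V, Work7.w p A * (2 * ∑ d ∈ A, TSP c (A.erase d)) =
        2 * ∑ d : V, Work7.w p A * (if d ∈ A then TSP c (A.erase d) else 0) := by
      intro A
      rw [← Finset.mul_sum, Finset.sum_ite_mem, Finset.univ_inter]
      ring
    rw [Finset.sum_congr rfl (fun A _ => e A), ← Finset.mul_sum, Finset.sum_comm]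
  have step5 : ∀ d : V,
      ∑ A : Finset V, Work7.w p A * (if d ∈ A then TSP c (A.erase d) else 0) ≤ p d * E := by
    intro d
    rw [Work7.W1 p d (fun A => TSP c (A.erase d))]
    apply mul_le_mul_of_nonneg_left _ (hp0 d)
    have e1 : ∀ A : Finset V, TSP c ((insert d A).erase d) = TSP c (A.erase d) := by
      intro A; rw [Finset.erase_insert_eq_erase]
    calc ∑ A : Finset V, Work7.w p A * TSP c ((insert d A).erase d)
        = apExpect p (fun A => TSP c (A.erase d)) := by
          rw [Work7.apExpect_eq]
          exact Finset.sum_congr rfl fun A _ => by rw [e1 A]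
      _ ≤ E := by
          rw [hE]
          exact Work7.apExpect_mono p hp0 hp1 fun A =>
            Work4.TSP_erase_le c hc0 hcrefl htri A d  -- check name/namespace
  have total : ∑ d : V, p d * G d ≤ 2 * E + 2 * (q * E) := by
    calc ∑ d : V, p d * G d = ∑ A : Finset V, Work7.w p A * ((A.card : ℝ) * TSP c A) := sum1
      _ = 2 * E + ∑ A : Finset V, Work7.w p A * (((A.card : ℝ) - 2) * TSP c A) := step2
      _ ≤ 2 * E + ∑ A : Finset V, Work7.w p A * (2 * ∑ d ∈ A, TSP c (A.erase d)) := by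
          linarith [step3]
      _ = 2 * E + 2 * ∑ d : V, ∑ A : Finset V,
            Work7.w p A * (if d ∈ A then TSP c (A.erase d) else 0) := by rw [step4]
      _ ≤ 2 * E + 2 * ∑ d : V, p d * E := by
          have := Finset.sum_le_sum (fun d (_ : d ∈ Finset.univ) => step5 d)
          linarith
      _ = 2 * E + 2 * (q * E) := by rw [← Finset.sum_mul, ← hq]
  -- pigeonhole
  by_contra hcon
  push_neg at hcon
  have hbad : ∀ d : V, 2 * (1 + 1 / q) * E < G d := by
    intro d
    exact hcon d (part1 d)
  obtain ⟨d₀, hd₀⟩ : ∃ d : V, 0 < p d := by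
    by_contra hall
    push_neg at hall
    have : q ≤ 0 := by
      rw [hq]
      exact Finset.sum_nonpos fun v _ => hall v
    linarith
  have hlt : ∑ d : V, p d * (2 * (1 + 1 / q) * E) < ∑ d : V, p d * G d := by
    apply Finset.sum_lt_sum
    · intro d _
      exact mul_le_mul_of_nonneg_left (le_of_lt (hbad d)) (hp0 d)
    · exact ⟨d₀, Finset.mem_univ d₀, by
        exact mul_lt_mul_of_pos_left (hbad d₀) hd₀⟩
  have heq : ∑ d : V, p d * (2 * (1 + 1 / q) * E) = 2 * E + 2 * (q * E) := by
    rw [← Finset.sum_mul, ← hq]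
    field_simp
    ring
  linarith

end
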